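/- If T is a tree and W ⊆ V(T) is a vertex cover of T, then the set W × {a} ⊆ V(T) × V(K₂), where a is one of the two vertices of K₂, is a decycling set of T □ K₂; in particular, the subgraph of T □ K₂ induced by the complement of W × {a} is acyclic. -/

import Mathlib

open SimpleGraph

/-- The star `S_m = K_{1,m-1}` on `m` vertices, with center the vertex `0`. -/
def starGraph (m : ℕ) : SimpleGraph (Fin m) where
  Adj i j := i ≠ j ∧ (i.val = 0 ∨ j.val = 0)
  symm := ⟨fun _ _ h => ⟨h.1.symm, h.2.symm⟩⟩
  loopless := ⟨fun _ h => h.1 rfl⟩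

/-- The decycling number: the minimum size of a set of vertices whose removal
leaves an acyclic graph. -/
noncomputable def decyclingNumber {V : Type*} [Fintype V] (G : SimpleGraph V) : ℕ :=
  sInf {k | ∃ S : Finset V, S.card = k ∧ (G.induce ((↑S : Set V)ᶜ)).IsAcyclic}

/-- The forest number: the maximum size of a set of vertices inducing a forest. -/
noncomputable def forestNumber {V : Type*} [Fintype V] (G : SimpleGraph V) : ℕ :=
  sSup {k | ∃ S : Finset V, S.card = k ∧ (G.induce (↑S : Set V)).IsAcyclic}

/-- The matching number: the maximum size of a set of pairwise non-incident edges. -/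
noncomputable def matchingNumber {V : Type*} [Fintype V] (G : SimpleGraph V) : ℕ :=
  sSup {k | ∃ M : Finset (Sym2 V), ↑M ⊆ G.edgeSet ∧
    (M : Set (Sym2 V)).Pairwise (fun e f => ∀ v, ¬(v ∈ e ∧ v ∈ f)) ∧ M.card = k}

/-- A cycle cannot pass through a vertex whose only neighbor in the support is a
single vertex `y`. -/
lemma no_cycle_through_unique_nbr {α : Type*} [DecidableEq α] {G : SimpleGraph α} {x y v : α}
    {c : G.Walk v v} (hc : c.IsCycle) (hx : x ∈ c.support)
    (hy : ∀ z ∈ c.support, G.Adj x z → z = y) : False := by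
  have hd : (c.rotate x hx).IsCycle := hc.rotate hx
  have h3 : 3 ≤ (c.rotate x hx).length := hd.three_le_length
  have hsub : ∀ z ∈ (c.rotate x hx).support, z ∈ c.support := by
    intro z hz
    rw [(c.rotate x hx).support_eq_cons] at hz
    rcases List.mem_cons.mp hz with h | h
    · exact h ▸ hx
    · exact List.mem_of_mem_tail
        (((c.support_rotate x hx).perm.mem_iff).mp h)
  obtain ⟨w, h, p, hde⟩ := SimpleGraph.Walk.not_nil_iff.mp hd.not_nil
  have hcyc : (SimpleGraph.Walk.cons h p).IsCycle := hde ▸ hd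
  rw [SimpleGraph.Walk.cons_isCycle_iff] at hcyc
  have hpsub : ∀ z ∈ p.support, z ∈ c.support := by
    intro z hz
    exact hsub z (by rw [hde, SimpleGraph.Walk.support_cons]; exact List.mem_cons_of_mem _ hz)
  have hw : w = y := hy w (hpsub w p.start_mem_support) h
  have hplen : p.length ≠ 0 := by
    have : (c.rotate x hx).length = p.length + 1 := by rw [hde, SimpleGraph.Walk.length_cons]
    omega
  have hpr : ¬ p.reverse.Nil := by
    rw [SimpleGraph.Walk.nil_iff_length_eq, SimpleGraph.Walk.length_reverse]
    exact hplen
  obtain ⟨z, h2, p2, hde2⟩ := SimpleGraph.Walk.not_nil_iff.mp hpr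
  have hzsupp : z ∈ c.support := by
    apply hpsub
    have : z ∈ p.reverse.support := by
      rw [hde2, SimpleGraph.Walk.support_cons]
      exact List.mem_cons_of_mem _ p2.start_mem_support
    rwa [SimpleGraph.Walk.support_reverse, List.mem_reverse] at this
  have hz : z = y := hy z hzsupp h2
  have hmem : s(x, z) ∈ p.reverse.edges := by
    rw [hde2, SimpleGraph.Walk.edges_cons]
    exact List.mem_cons_self
  rw [SimpleGraph.Walk.edges_reverse, List.mem_reverse] at hmem
  rw [hz, ← hw] at hmem
  exact hcyc.2 hmem

/-- A walk in `T □ K₂` staying in a single layer `b` projects to a walk in `T`. -/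
lemma exists_walk_fst {V : Type*} (T : SimpleGraph V) (b : Fin 2) :
    ∀ {x y : V × Fin 2} (p : (T.boxProd (⊤ : SimpleGraph (Fin 2))).Walk x y),
    (∀ z ∈ p.support, z.2 = b) → ∃ q : T.Walk x.1 y.1,
      q.support = p.support.map Prod.fst ∧ q.edges = p.edges.map (Sym2.map Prod.fst) := by
  intro x y p
  induction p with
  | nil => exact fun _ => ⟨.nil, by simp, by simp⟩
  | @cons u v w h p ih =>
    intro hs
    have hu : u.2 = b := hs u (by simp)
    have hv : v.2 = b := hs v (by simp [SimpleGraph.Walk.support_cons])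
    have hadj : T.Adj u.1 v.1 := by
      rcases (SimpleGraph.boxProd_adj.mp h) with ⟨ha, _⟩ | ⟨ha, _⟩
      · exact ha
      · exact absurd (hu.trans hv.symm) ha.ne
    obtain ⟨q, hq1, hq2⟩ := ih (fun z hz => hs z (by simp [SimpleGraph.Walk.support_cons, hz]))
    exact ⟨.cons hadj q, by simp [hq1], by simp [hq2]⟩

theorem vertexCover_gives_decyclingSet_of_prism
    {V : Type*} [Fintype V]
    (T : SimpleGraph V) (hT : T.IsTree)
    (W : Set V) (hW : ∀ ⦃u v : V⦄, T.Adj u v → u ∈ W ∨ v ∈ W)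
    (a : Fin 2) :
    ((T.boxProd (⊤ : SimpleGraph (Fin 2))).induce
      ({p : V × Fin 2 | p.1 ∈ W ∧ p.2 = a} : Set (V × Fin 2))ᶜ).IsAcyclic := by
  classical
  set S : Set (V × Fin 2) := {p : V × Fin 2 | p.1 ∈ W ∧ p.2 = a} with hS
  set G : SimpleGraph (V × Fin 2) := T.boxProd (⊤ : SimpleGraph (Fin 2)) with hG
  intro v c hc
  let ι : G.induce Sᶜ ↪g G := SimpleGraph.Embedding.induce Sᶜ
  have hinj : Function.Injective (ι : ↥(Sᶜ) → V × Fin 2) := ι.injective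
  set c₁ := c.map ι.toHom with hc₁def
  have hc₁ : c₁.IsCycle := hc.map hinj
  -- every vertex of c₁ avoids S
  have hnotS : ∀ z ∈ c₁.support, z ∉ S := by
    intro z hz
    rw [hc₁def, SimpleGraph.Walk.support_map, List.mem_map] at hz
    obtain ⟨t, _, rfl⟩ := hz
    exact t.2
  have hfin : ∀ (a z : Fin 2), z ≠ a → z = a + 1 := by decide
  have hfin' : ∀ (a z : Fin 2), z ≠ a + 1 → z = a := by decide
  -- pendant argument: no vertex of c₁ lies in layer a
  have hlayer : ∀ z ∈ c₁.support, z.2 = a + 1 := by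
    intro x hx
    by_contra hne
    have hxa : x.2 = a := hfin' a x.2 hne
    have hxW : x.1 ∉ W := by
      intro hmem
      exact hnotS x hx ⟨hmem, hxa⟩
    have huniq : ∀ z ∈ c₁.support, G.Adj x z → z = (x.1, a + 1) := by
      intro z hz hadj
      rcases (SimpleGraph.boxProd_adj.mp hadj) with ⟨hTadj, hsnd⟩ | ⟨htop, hfst⟩
      · exfalso
        have hzW : z.1 ∉ W := by
          intro hmem
          exact hnotS z hz ⟨hmem, by rw [← hsnd, hxa]⟩
        rcases hW hTadj with h | h
        · exact hxW h
        · exact hzW h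
      · have : z.2 = a + 1 := hfin a z.2 (by rw [← hxa]; exact fun h => htop.ne h.symm)
        exact Prod.ext hfst.symm this
    exact no_cycle_through_unique_nbr hc₁ hx huniq
  obtain ⟨q, hq1, hq2⟩ := exists_walk_fst T (a + 1) c₁ hlayer
  -- recover edges of c₁ from their projections
  have key : ∀ e ∈ c₁.edges,
      Sym2.map (fun r : V => (r, a + 1)) (Sym2.map Prod.fst e) = e := by
    intro e
    induction e using Sym2.ind with
    | _ p r =>
      intro he
      have hp : p.2 = a + 1 := hlayer p (c₁.fst_mem_support_of_mem_edges he)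
      have hr : r.2 = a + 1 := hlayer r (c₁.snd_mem_support_of_mem_edges he)
      simp only [Sym2.map_pair_eq]
      rw [show ((p.1, a + 1) : V × Fin 2) = p from Prod.ext rfl hp.symm,
        show ((r.1, a + 1) : V × Fin 2) = r from Prod.ext rfl hr.symm]
  have hqcyc : q.IsCycle := by
    rw [SimpleGraph.Walk.isCycle_def]
    refine ⟨?_, ?_, ?_⟩
    · rw [SimpleGraph.Walk.isTrail_def, hq2]
      refine List.Nodup.map_on ?_ hc₁.isCircuit.isTrail.edges_nodup
      intro e₁ he₁ e₂ he₂ heq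
      rw [← key e₁ he₁, ← key e₂ he₂, heq]
    · intro hqnil
      have h3 : 3 ≤ c₁.length := hc₁.three_le_length
      have hqe : q.edges = [] := by rw [hqnil]; rfl
      rw [hqe] at hq2
      have h0 : c₁.edges = [] := List.map_eq_nil_iff.mp hq2.symm
      have : c₁.edges.length = 0 := by rw [h0]; rfl
      rw [SimpleGraph.Walk.length_edges] at this
      omega
    · have htail : q.support.tail = c₁.support.tail.map Prod.fst := by
        rw [hq1]
        cases h : c₁.support with
        | nil => simp [h]
        | cons hd tl => simp [h]
      rw [htail]
      refine List.Nodup.map_on ?_ hc₁.support_nodup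
      intro z₁ hz₁ z₂ hz₂ heq
      have h₁ : z₁.2 = a + 1 := hlayer z₁ (List.mem_of_mem_tail hz₁)
      have h₂ : z₂.2 = a + 1 := hlayer z₂ (List.mem_of_mem_tail hz₂)
      exact Prod.ext heq (h₁.trans h₂.symm)
  exact hT.IsAcyclic q hqcyc
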